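/- arXiv:1809.02951 — 9 statements merged into one kernel-verified Lean document; each statement's English description precedes it below -/
import Mathlib

section
/- Let q be a nonzero complex number that is not a root of unity, and let α, β be nonzero complex numbers such that α^u β^v = q² for some integers u, v. If (r, s) and (r₁, s₁) are both minimal pairs with respect to (α, β), then (r₁, s₁) = (r, s) or (r₁, s₁) = (−r, −s). -/
/-- A pair of integers `(r, s)` with `α^r * β^s = 1` is *minimal* with respect to
`(α, β)` if whenever `r = w * r'`, `s = w * s'` with `w ≠ ±1`, one has `α^r' * β^s' ≠ 1`. -/
def IsMinimalPair (α β : ℂ) (r s : ℤ) : Prop :=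
  α ^ r * β ^ s = 1 ∧
    ∀ w r' s' : ℤ, w ≠ 1 → w ≠ -1 → r = w * r' → s = w * s' → α ^ r' * β ^ s' ≠ 1

private lemma mem_mul (x y : ℂ) (n p q : ℤ) (h : x ^ p * y ^ q = 1) :
    x ^ (n * p) * y ^ (n * q) = 1 := by
  have : (x ^ p * y ^ q) ^ n = 1 := by rw [h, one_zpow]
  rwa [mul_zpow, ← zpow_mul, ← zpow_mul, mul_comm p n, mul_comm q n] at this

private lemma mem_add (x y : ℂ) (hx : x ≠ 0) (hy : y ≠ 0) (p₁ q₁ p₂ q₂ : ℤ)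
    (h1 : x ^ p₁ * y ^ q₁ = 1) (h2 : x ^ p₂ * y ^ q₂ = 1) :
    x ^ (p₁ + p₂) * y ^ (q₁ + q₂) = 1 := by
  rw [zpow_add₀ hx, zpow_add₀ hy]
  calc x ^ p₁ * x ^ p₂ * (y ^ q₁ * y ^ q₂)
      = (x ^ p₁ * y ^ q₁) * (x ^ p₂ * y ^ q₂) := by ring
    _ = 1 := by rw [h1, h2, one_mul]

/-- If `q` is not a root of unity, `α^u * β^v = q^2` for some integers
`u, v`, and `(r, s)` and `(r₁, s₁)` are both minimal pairs with respect to `(α, β)`,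
then `(r₁, s₁) = (r, s)` or `(r₁, s₁) = (-r, -s)`. -/
theorem minimal_pair_unique_up_to_sign (q α β : ℂ) (hq : q ≠ 0)
    (hqn : ∀ n : ℤ, n ≠ 0 → q ^ n ≠ 1) (hα : α ≠ 0) (hβ : β ≠ 0)
    (huv : ∃ u v : ℤ, α ^ u * β ^ v = q ^ 2)
    (r s r₁ s₁ : ℤ)
    (h1 : IsMinimalPair α β r s) (h2 : IsMinimalPair α β r₁ s₁) :
    (r₁, s₁) = (r, s) ∨ (r₁, s₁) = (-r, -s) := by
  obtain ⟨u, v, huv⟩ := huv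
  obtain ⟨hL1, hmin1⟩ := h1
  obtain ⟨hL2, hmin2⟩ := h2
  -- the determinant D := s₁ * r - s * r₁ vanishes
  set D : ℤ := s₁ * r - s * r₁ with hD
  have hαD : α ^ D * β ^ (0 : ℤ) = 1 := by
    have := mem_add α β hα hβ (s₁ * r) (s₁ * s) (-s * r₁) (-s * s₁)
      (mem_mul α β s₁ r s hL1) (mem_mul α β (-s) r₁ s₁ hL2)
    rwa [show s₁ * r + -s * r₁ = D by ring, show s₁ * s + -s * s₁ = 0 by ring] at this
  have hβD : α ^ (0 : ℤ) * β ^ D = 1 := by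
    have := mem_add α β hα hβ (-r₁ * r) (-r₁ * s) (r * r₁) (r * s₁)
      (mem_mul α β (-r₁) r s hL1) (mem_mul α β r r₁ s₁ hL2)
    rwa [show -r₁ * r + r * r₁ = 0 by ring, show -r₁ * s + r * s₁ = D by ring] at this
  have hαD' : α ^ D = 1 := by simpa using hαD
  have hβD' : β ^ D = 1 := by simpa using hβD
  have hD0 : D = 0 := by
    by_contra hne
    have hqD : q ^ (2 * D) = 1 := by
      have h2' : (α ^ u * β ^ v) ^ D = 1 := by
        rw [mul_zpow, ← zpow_mul, ← zpow_mul, mul_comm u D, mul_comm v D,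
          zpow_mul, zpow_mul, hαD', hβD', one_zpow, one_zpow, one_mul]
      rw [huv] at h2'
      rw [show ((2 : ℤ) * D) = (2 : ℕ) * D by norm_num, zpow_mul, zpow_natCast]
      exact h2'
    exact hqn (2 * D) (by omega) hqD
  have hprop : s₁ * r = s * r₁ := by omega
  -- (r, s) ≠ (0, 0)
  have hrs : ¬(r = 0 ∧ s = 0) := by
    rintro ⟨rfl, rfl⟩
    exact hmin1 0 0 0 (by norm_num) (by norm_num) (by ring) (by ring) (by simp)
  -- primitive vector (a, b)
  set g : ℤ := (Int.gcd r s : ℤ) with hgdef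
  have hgpos : 0 < g := by
    have : Int.gcd r s ≠ 0 := fun h => hrs (Int.gcd_eq_zero_iff.mp h)
    omega
  set a : ℤ := r / g with hadef
  set b : ℤ := s / g with hbdef
  have hra : g * a = r := Int.mul_ediv_cancel' (Int.gcd_dvd_left r s)
  have hsb : g * b = s := Int.mul_ediv_cancel' (Int.gcd_dvd_right r s)
  have hab : Int.gcd a b = 1 := by
    apply Int.gcd_div_gcd_div_gcd
    rw [hgdef] at hgpos; exact_mod_cast hgpos
  -- Bezout for (a, b)
  have hbez : a * Int.gcdA a b + b * Int.gcdB a b = 1 := by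
    have := Int.gcd_eq_gcd_ab a b
    rw [hab] at this
    exact_mod_cast this.symm
  set x : ℤ := Int.gcdA a b
  set y : ℤ := Int.gcdB a b
  set m₁ : ℤ := r₁ * x + s₁ * y with hm₁
  have heq : s₁ * a = b * r₁ := by
    have h' : g * (s₁ * a) = g * (b * r₁) := by
      rw [show g * (s₁ * a) = s₁ * (g * a) by ring, hra,
        show g * (b * r₁) = (g * b) * r₁ by ring, hsb]
      linarith [hprop]
    exact mul_left_cancel₀ (by omega) h'
  have hr₁ : m₁ * a = r₁ := by
    have : m₁ * a - r₁ = r₁ * (a * x + b * y - 1) + y * (s₁ * a - b * r₁) := by ring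
    rw [hbez, heq] at this
    simpa using by linarith [this]
  have hs₁ : m₁ * b = s₁ := by
    have : m₁ * b - s₁ = s₁ * (a * x + b * y - 1) + x * (b * r₁ - s₁ * a) := by ring
    rw [hbez, heq] at this
    simpa using by linarith [this]
  -- lattice memberships in terms of (a, b)
  have hL1' : α ^ (g * a) * β ^ (g * b) = 1 := by rw [hra, hsb]; exact hL1
  have hL2' : α ^ (m₁ * a) * β ^ (m₁ * b) = 1 := by rw [hr₁, hs₁]; exact hL2
  -- e := gcd g m₁
  set e : ℤ := (Int.gcd g m₁ : ℤ) with hedef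
  have hepos : 0 < e := by
    have : Int.gcd g m₁ ≠ 0 := fun h => by
      have := (Int.gcd_eq_zero_iff.mp h).1; omega
    omega
  have hbez2 : g * Int.gcdA g m₁ + m₁ * Int.gcdB g m₁ = e := by
    have := Int.gcd_eq_gcd_ab g m₁
    exact this.symm
  set X : ℤ := Int.gcdA g m₁
  set Y : ℤ := Int.gcdB g m₁
  have hLe : α ^ (e * a) * β ^ (e * b) = 1 := by
    have := mem_add α β hα hβ (X * (g * a)) (X * (g * b)) (Y * (m₁ * a)) (Y * (m₁ * b))
      (mem_mul α β X (g * a) (g * b) hL1') (mem_mul α β Y (m₁ * a) (m₁ * b) hL2')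
    rwa [show X * (g * a) + Y * (m₁ * a) = (g * X + m₁ * Y) * a by ring,
      show X * (g * b) + Y * (m₁ * b) = (g * X + m₁ * Y) * b by ring, hbez2] at this
  -- e ∣ g, and minimality of (r,s) forces g = e
  obtain ⟨w, hw⟩ : e ∣ g := Int.gcd_dvd_left g m₁
  have hge : g = e := by
    by_contra hne
    have hw1 : w ≠ 1 := by rintro rfl; omega
    have hwm1 : w ≠ -1 := by rintro rfl; omega
    exact hmin1 w (e * a) (e * b) hw1 hwm1
      (by rw [← hra, hw]; ring) (by rw [← hsb, hw]; ring) hLe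
  obtain ⟨w₁, hw₁⟩ : e ∣ m₁ := Int.gcd_dvd_right g m₁
  have hw₁pm : w₁ = 1 ∨ w₁ = -1 := by
    by_contra hne
    push_neg at hne
    exact hmin2 w₁ (e * a) (e * b) hne.1 hne.2
      (by rw [← hr₁, hw₁]; ring) (by rw [← hs₁, hw₁]; ring) hLe
  rcases hw₁pm with h | h
  · left
    have hm : m₁ = g := by rw [hw₁, h, mul_one, ← hge]
    rw [Prod.mk.injEq]
    constructor
    · rw [← hr₁, hm, hra]
    · rw [← hs₁, hm, hsb]
  · right
    have hm : m₁ = -g := by rw [hw₁, h, hge]; ring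
    rw [Prod.mk.injEq]
    constructor
    · rw [← hr₁, hm, ← hra]; ring
    · rw [← hs₁, hm, ← hsb]; ring
end

section
/- Let q, α, β be nonzero complex numbers and let Φ be the integral 2×2 matrix with rows (r, s) and (u, v), where α^r β^s = 1, α^u β^v = q², and the pair (r, s) is minimal with respect to (α, β). Let σ ∈ SL(2, ℤ) and let (α', β') = σ·(α, β) under the SL(2, ℤ)-action on (ℂ∖{0})². Write Φ' = Φ·σ⁻¹, with rows (r', s') and (u', v'). Then α'^(r') β'^(s') = 1, α'^(u') β'^(v') = q², and the pair (r', s') is minimal with respect to (α', β'). -/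
lemma key_pow (α β : ℂ) (hα : α ≠ 0) (hβ : β ≠ 0) (k m l n a b : ℤ) :
    (α ^ k * β ^ m) ^ a * (α ^ l * β ^ n) ^ b = α ^ (a * k + b * l) * β ^ (a * m + b * n) := by
  rw [mul_zpow, mul_zpow, ← zpow_mul, ← zpow_mul, ← zpow_mul, ← zpow_mul,
    zpow_add₀ hα, zpow_add₀ hβ, mul_comm k a, mul_comm m a, mul_comm l b, mul_comm n b]
  ring

/-- Transporting the matrix `Φ = !![r, s; u, v]` of integral parameters
along the `SL(2, ℤ)`-action `σ · (α, β) = (α^k β^m, α^l β^n)` by `Φ' = Φ * σ⁻¹`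
again yields integral parameters: `α'^r' β'^s' = 1`, `α'^u' β'^v' = q^2`, and
`(r', s')` is minimal with respect to `(α', β')`. -/
theorem integral_parameters_transform (q α β : ℂ) (hq : q ≠ 0) (hα : α ≠ 0) (hβ : β ≠ 0)
    (r s u v : ℤ) (h2 : α ^ u * β ^ v = q ^ 2)
    (hmin : IsMinimalPair α β r s)
    (σ : Matrix.SpecialLinearGroup (Fin 2) ℤ)
    (α' β' : ℂ)
    (hα' : α' = α ^ ((σ : Matrix (Fin 2) (Fin 2) ℤ) 0 0) *
      β ^ ((σ : Matrix (Fin 2) (Fin 2) ℤ) 0 1))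
    (hβ' : β' = α ^ ((σ : Matrix (Fin 2) (Fin 2) ℤ) 1 0) *
      β ^ ((σ : Matrix (Fin 2) (Fin 2) ℤ) 1 1))
    (Φ' : Matrix (Fin 2) (Fin 2) ℤ)
    (hΦ' : Φ' = !![r, s; u, v] * ((σ⁻¹ : Matrix.SpecialLinearGroup (Fin 2) ℤ) :
      Matrix (Fin 2) (Fin 2) ℤ)) :
    α' ^ (Φ' 0 0) * β' ^ (Φ' 0 1) = 1 ∧
    α' ^ (Φ' 1 0) * β' ^ (Φ' 1 1) = q ^ 2 ∧
    IsMinimalPair α' β' (Φ' 0 0) (Φ' 0 1) := by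
  set k := (σ : Matrix (Fin 2) (Fin 2) ℤ) 0 0 with hk
  set m := (σ : Matrix (Fin 2) (Fin 2) ℤ) 0 1 with hm
  set l := (σ : Matrix (Fin 2) (Fin 2) ℤ) 1 0 with hl
  set n := (σ : Matrix (Fin 2) (Fin 2) ℤ) 1 1 with hn
  have hdet : k * n - m * l = 1 := by
    have := σ.prop
    rw [Matrix.det_fin_two] at this
    linarith
  have e00 : Φ' 0 0 = r * n + s * -l := by
    rw [hΦ', Matrix.SpecialLinearGroup.coe_inv, Matrix.adjugate_fin_two]
    simp [Matrix.mul_apply, Fin.sum_univ_two, hk, hm, hl, hn]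
  have e01 : Φ' 0 1 = r * -m + s * k := by
    rw [hΦ', Matrix.SpecialLinearGroup.coe_inv, Matrix.adjugate_fin_two]
    simp [Matrix.mul_apply, Fin.sum_univ_two, hk, hm, hl, hn]
  have e10 : Φ' 1 0 = u * n + v * -l := by
    rw [hΦ', Matrix.SpecialLinearGroup.coe_inv, Matrix.adjugate_fin_two]
    simp [Matrix.mul_apply, Fin.sum_univ_two, hk, hm, hl, hn]
  have e11 : Φ' 1 1 = u * -m + v * k := by
    rw [hΦ', Matrix.SpecialLinearGroup.coe_inv, Matrix.adjugate_fin_two]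
    simp [Matrix.mul_apply, Fin.sum_univ_two, hk, hm, hl, hn]
  -- general transport formula
  have key : ∀ a b : ℤ, α' ^ a * β' ^ b = α ^ (a * k + b * l) * β ^ (a * m + b * n) := by
    intro a b
    rw [hα', hβ', key_pow α β hα hβ]
  have trans1 : ∀ a b : ℤ, α' ^ (a * n + b * -l) * β' ^ (a * -m + b * k) = α ^ a * β ^ b := by
    intro a b
    rw [key, show (a * n + b * -l) * k + (a * -m + b * k) * l = a by linear_combination a * hdet,
      show (a * n + b * -l) * m + (a * -m + b * k) * n = b by linear_combination b * hdet]
  refine ⟨?_, ?_, ?_, ?_⟩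
  · rw [e00, e01, trans1]; exact hmin.1
  · rw [e10, e11, trans1]; exact h2
  · rw [e00, e01, trans1]; exact hmin.1
  · intro w r'' s'' hw1 hw2 hr hs hcon
    rw [e00] at hr
    rw [e01] at hs
    rw [key] at hcon
    refine hmin.2 w (r'' * k + s'' * l) (r'' * m + s'' * n) hw1 hw2 ?_ ?_ hcon
    · linear_combination k * hr + l * hs - r * hdet
    · linear_combination m * hr + n * hs - s * hdet
end

section
/- Let r, s, u, v be integers with r·v − s·u = 2 and gcd(r, s) = 1, and let q be a nonzero complex number that is not a root of unity. Then the set {(α, β) ∈ (ℂ∖{0})² : α^r β^s = 1 and α^u β^v = q²} equals {(q^(−s), q^r), ((−1)^s q^(−s), (−1)^r q^r)}, and these two pairs are distinct. -/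
private lemma neg_one_zpow_eq_one_iff_even' (n : ℤ) : (-1 : ℂ) ^ n = 1 ↔ Even n := by
  constructor
  · intro h
    rcases Int.even_or_odd n with he | ho
    · exact he
    · rw [ho.neg_one_zpow] at h; norm_num at h
  · exact fun h => h.neg_one_zpow

private lemma zpow_helper (q : ℂ) (hq : q ≠ 0) (a b c a' b' c' : ℤ) :
    ((-1 : ℂ) ^ a * q ^ b) ^ c * ((-1 : ℂ) ^ a' * q ^ b') ^ c'
      = (-1 : ℂ) ^ (a * c + a' * c') * q ^ (b * c + b' * c') := by
  have h1 : (-1 : ℂ) ≠ 0 := by norm_num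
  rw [mul_zpow, mul_zpow, ← zpow_mul, ← zpow_mul, ← zpow_mul, ← zpow_mul,
    zpow_add₀ h1, zpow_add₀ hq]
  ring

private lemma not_both_even (r s : ℤ) (hg : Int.gcd r s = 1) : ¬ (Even r ∧ Even s) := by
  rintro ⟨⟨a, ha⟩, ⟨b, hb⟩⟩
  have h1 : (2 : ℤ) ∣ r := ⟨a, by omega⟩
  have h2 : (2 : ℤ) ∣ s := ⟨b, by omega⟩
  have := Int.dvd_gcd h1 h2
  rw [hg] at this
  norm_num at this

/-- For integers `r, s, u, v` with `r*v - s*u = 2` and `gcd(r, s) = 1`,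
and `q` nonzero and not a root of unity, the set of pairs `(α, β)` of nonzero complex
numbers with `α^r β^s = 1` and `α^u β^v = q^2` equals
`{(q^(-s), q^r), ((-1)^s q^(-s), (-1)^r q^r)}`, and these two pairs are distinct. -/
theorem weight_constants_det_two_gcd_one (r s u v : ℤ) (h2 : r * v - s * u = 2)
    (hg : Int.gcd r s = 1) (q : ℂ) (hq : q ≠ 0) (hqn : ∀ n : ℤ, n ≠ 0 → q ^ n ≠ 1) :
    ({p : ℂ × ℂ | p.1 ≠ 0 ∧ p.2 ≠ 0 ∧ p.1 ^ r * p.2 ^ s = 1 ∧ p.1 ^ u * p.2 ^ v = q ^ 2}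
      = {(q ^ (-s), q ^ r), ((-1 : ℂ) ^ s * q ^ (-s), (-1 : ℂ) ^ r * q ^ r)}) ∧
    ((q ^ (-s), q ^ r) : ℂ × ℂ) ≠ ((-1 : ℂ) ^ s * q ^ (-s), (-1 : ℂ) ^ r * q ^ r) := by
  have hm1 : (-1 : ℂ) ≠ 0 := by norm_num
  have hq2 : (q : ℂ) ^ (2 : ℕ) = q ^ (2 : ℤ) := by
    rw [← zpow_natCast]; norm_num
  constructor
  · ext ⟨α, β⟩
    simp only [Set.mem_setOf_eq, Set.mem_insert_iff, Set.mem_singleton_iff, Prod.mk.injEq]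
    constructor
    · rintro ⟨hα, hβ, h1, h2'⟩
      have key : ∀ m n : ℤ, α ^ (r * m + u * n) * β ^ (s * m + v * n) = q ^ (2 * n) := by
        intro m n
        calc α ^ (r * m + u * n) * β ^ (s * m + v * n)
            = (α ^ r * β ^ s) ^ m * (α ^ u * β ^ v) ^ n := by
              rw [mul_zpow, mul_zpow, ← zpow_mul, ← zpow_mul, ← zpow_mul, ← zpow_mul,
                zpow_add₀ hα, zpow_add₀ hβ]
              ring
          _ = 1 ^ m * (q ^ (2 : ℤ)) ^ n := by rw [h1, h2', hq2]
          _ = q ^ (2 * n) := by rw [one_zpow, one_mul, ← zpow_mul]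
      have hA : α ^ (2 : ℤ) = q ^ (2 * (-s)) := by
        have := key v (-s)
        rw [show r * v + u * (-s) = 2 by linear_combination h2, show s * v + v * (-s) = 0 by ring,
          zpow_zero, mul_one] at this
        exact this
      have hB : β ^ (2 : ℤ) = q ^ (2 * r) := by
        have := key (-u) r
        rw [show r * (-u) + u * r = 0 by ring, show s * (-u) + v * r = 2 by linear_combination h2,
          zpow_zero, one_mul] at this
        exact this
      have hA' : (α - q ^ (-s)) * (α + q ^ (-s)) = 0 := by
        have h : (q ^ (-s) : ℂ) ^ (2 : ℤ) = q ^ (2 * (-s)) := by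
          rw [← zpow_mul]; ring_nf
        have : α ^ (2 : ℤ) = (q ^ (-s)) ^ (2 : ℤ) := by rw [hA, h]
        simp only [zpow_two] at this
        linear_combination this
      have hB' : (β - q ^ r) * (β + q ^ r) = 0 := by
        have h : (q ^ r : ℂ) ^ (2 : ℤ) = q ^ (2 * r) := by
          rw [← zpow_mul]; ring_nf
        have : β ^ (2 : ℤ) = (q ^ r) ^ (2 : ℤ) := by rw [hB, h]
        simp only [zpow_two] at this
        linear_combination this
      have hqs : (q : ℂ) ^ (-s) ≠ 0 := zpow_ne_zero _ hq
      have hqr : (q : ℂ) ^ r ≠ 0 := zpow_ne_zero _ hq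
      -- reduce to sign equations
      have hα2 : α = q ^ (-s) ∨ α = -1 * q ^ (-s) := by
        rcases mul_eq_zero.mp hA' with h | h
        · left; linear_combination h
        · right; linear_combination h
      have hβ2 : β = q ^ r ∨ β = -1 * q ^ r := by
        rcases mul_eq_zero.mp hB' with h | h
        · left; linear_combination h
        · right; linear_combination h
      -- uniform treatment: α = (-1)^e * q^(-s), β = (-1)^f * q^r with e, f ∈ {0,1}
      have main : ∀ e f : ℤ, α = (-1 : ℂ) ^ e * q ^ (-s) → β = (-1 : ℂ) ^ f * q ^ r →
          (-1 : ℂ) ^ (e * r + f * s) = 1 ∧ (-1 : ℂ) ^ (e * u + f * v) = 1 := by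
        intro e f he hf
        subst he hf
        rw [zpow_helper q hq] at h1 h2'
        constructor
        · rw [show -s * r + r * s = 0 by ring, zpow_zero, mul_one] at h1
          exact h1
        · rw [show -s * u + r * v = 2 by linear_combination h2, hq2] at h2'
          have h2'' : ((-1 : ℂ) ^ (e * u + f * v) - 1) * q ^ (2 : ℤ) = 0 := by
            linear_combination h2'
          rcases mul_eq_zero.mp h2'' with h | h
          · linear_combination h
          · exact absurd h (zpow_ne_zero _ hq)
      rcases hα2 with hα2 | hα2 <;> rcases hβ2 with hβ2 | hβ2
      · left
        exact ⟨hα2, hβ2⟩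
      · -- α = +, β = - : s even, hence r odd
        have := main 0 1 (by rw [hα2]; norm_num) (by rw [hβ2]; norm_num)
        rw [show (0 : ℤ) * r + 1 * s = s by ring] at this
        have hs : Even s := (neg_one_zpow_eq_one_iff_even' s).mp this.1
        have hr : Odd r := by
          rcases Int.even_or_odd r with h | h
          · exact absurd ⟨h, hs⟩ (not_both_even r s hg)
          · exact h
        right
        rw [hs.neg_one_zpow, hr.neg_one_zpow]
        exact ⟨by linear_combination hα2, by linear_combination hβ2⟩
      · -- α = -, β = + : r even, hence s odd
        have := main 1 0 (by rw [hα2]; norm_num) (by rw [hβ2]; norm_num)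
        rw [show (1 : ℤ) * r + 0 * s = r by ring] at this
        have hr : Even r := (neg_one_zpow_eq_one_iff_even' r).mp this.1
        have hs : Odd s := by
          rcases Int.even_or_odd s with h | h
          · exact absurd ⟨hr, h⟩ (not_both_even r s hg)
          · exact h
        right
        rw [hs.neg_one_zpow, hr.neg_one_zpow]
        exact ⟨by linear_combination hα2, by linear_combination hβ2⟩
      · -- α = -, β = - : r + s even, hence both odd
        have := main 1 1 (by rw [hα2]; norm_num) (by rw [hβ2]; norm_num)
        rw [show (1 : ℤ) * r + 1 * s = r + s by ring] at this
        have hrs : Even (r + s) := (neg_one_zpow_eq_one_iff_even' _).mp this.1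
        have hr : Odd r := by
          rcases Int.even_or_odd r with h | h
          · have hs : Even s := by
              rcases hrs with ⟨k, hk⟩; rcases h with ⟨m, hm⟩; exact ⟨k - m, by omega⟩
            exact absurd ⟨h, hs⟩ (not_both_even r s hg)
          · exact h
        have hs : Odd s := by
          rcases hrs with ⟨k, hk⟩; rcases hr with ⟨m, hm⟩; exact ⟨k - m - 1, by omega⟩
        right
        rw [hs.neg_one_zpow, hr.neg_one_zpow]
        exact ⟨by linear_combination hα2, by linear_combination hβ2⟩
    · -- reverse inclusion
      have mem : ∀ e f : ℤ, (-1 : ℂ) ^ (e * r + f * s) = 1 → (-1 : ℂ) ^ (e * u + f * v) = 1 →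
          ((-1 : ℂ) ^ e * q ^ (-s)) ≠ 0 ∧ ((-1 : ℂ) ^ f * q ^ r) ≠ 0 ∧
          ((-1 : ℂ) ^ e * q ^ (-s)) ^ r * ((-1 : ℂ) ^ f * q ^ r) ^ s = 1 ∧
          ((-1 : ℂ) ^ e * q ^ (-s)) ^ u * ((-1 : ℂ) ^ f * q ^ r) ^ v = q ^ 2 := by
        intro e f he hf
        refine ⟨mul_ne_zero (zpow_ne_zero _ hm1) (zpow_ne_zero _ hq),
          mul_ne_zero (zpow_ne_zero _ hm1) (zpow_ne_zero _ hq), ?_, ?_⟩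
        · rw [zpow_helper q hq, show -s * r + r * s = 0 by ring, zpow_zero, mul_one, he]
        · rw [zpow_helper q hq, show -s * u + r * v = 2 by linear_combination h2, hf, one_mul, hq2]
      rintro (⟨hα, hβ⟩ | ⟨hα, hβ⟩)
      · subst hα hβ
        have := mem 0 0 (by norm_num) (by norm_num)
        simpa using this
      · subst hα hβ
        have hse : Even (s * r + r * s) := ⟨s * r, by ring⟩
        have hve : Even (s * u + r * v) := ⟨1 + s * u, by linear_combination h2⟩
        exact mem s r hse.neg_one_zpow hve.neg_one_zpow
  · -- distinctness
    intro h
    rw [Prod.mk.injEq] at h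
    obtain ⟨h1, h2'⟩ := h
    have hqs : (q : ℂ) ^ (-s) ≠ 0 := zpow_ne_zero _ hq
    have hqr : (q : ℂ) ^ r ≠ 0 := zpow_ne_zero _ hq
    have hs : (-1 : ℂ) ^ s = 1 := by
      have := mul_right_cancel₀ hqs (show (1 : ℂ) * q ^ (-s) = (-1) ^ s * q ^ (-s) by
        rw [one_mul]; exact h1)
      exact this.symm
    have hr : (-1 : ℂ) ^ r = 1 := by
      have := mul_right_cancel₀ hqr (show (1 : ℂ) * q ^ r = (-1) ^ r * q ^ r by
        rw [one_mul]; exact h2')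
      exact this.symm
    exact not_both_even r s hg
      ⟨(neg_one_zpow_eq_one_iff_even' r).mp hr, (neg_one_zpow_eq_one_iff_even' s).mp hs⟩
end

section
/- Let t be a nonzero complex number that is not a root of unity, and let r, s be integers that are not both even. Then for every σ ∈ SL(2, ℤ), one has σ·(t^(−s), t^r) ≠ ((−1)^s t^(−s), (−1)^r t^r), i.e. the pairs (t^(−s), t^r) and ((−1)^s t^(−s), (−1)^r t^r) lie on different orbits of the SL(2, ℤ)-action on (ℂ∖{0})². -/
lemma aux_even_of_zpow_eq (t : ℂ) (ht : t ≠ 0)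
    (htn : ∀ n : ℤ, n ≠ 0 → t ^ n ≠ 1) (a b e : ℤ)
    (heq : t ^ a = (-1 : ℂ) ^ e * t ^ b) : Even e := by
  have h2 : t ^ (a * 2) = t ^ (b * 2) := by
    rw [zpow_mul, zpow_mul, heq, mul_zpow, ← zpow_mul, mul_comm e 2, zpow_mul]
    norm_num
  have hab : a = b := by
    by_contra hne
    have : t ^ (a * 2 - b * 2) = 1 := by
      rw [zpow_sub₀ ht, h2, div_self (zpow_ne_zero _ ht)]
    exact htn _ (by omega) this
  subst hab
  have h1 : (-1 : ℂ) ^ e = 1 := by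
    have hne := zpow_ne_zero a ht
    have : (1 : ℂ) * t ^ a = (-1 : ℂ) ^ e * t ^ a := by rw [one_mul]; exact heq
    exact (mul_right_cancel₀ hne this).symm
  by_contra hodd
  rw [Int.not_even_iff_odd] at hodd
  rw [hodd.neg_one_zpow] at h1
  norm_num at h1

/-- If `t` is not a root of unity and `r, s` are not both even, then the
pairs `(t^(-s), t^r)` and `((-1)^s t^(-s), (-1)^r t^r)` lie on different orbits of the
`SL(2, ℤ)`-action `σ · (α, β) = (α^k β^m, α^l β^n)` on pairs of nonzero complex numbers. -/
theorem pairs_on_different_SL2_orbits (t : ℂ) (ht : t ≠ 0)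
    (htn : ∀ n : ℤ, n ≠ 0 → t ^ n ≠ 1) (r s : ℤ) (h : ¬(Even r ∧ Even s)) :
    ∀ σ : Matrix.SpecialLinearGroup (Fin 2) ℤ,
      (((t ^ (-s)) ^ ((σ : Matrix (Fin 2) (Fin 2) ℤ) 0 0) *
          (t ^ r) ^ ((σ : Matrix (Fin 2) (Fin 2) ℤ) 0 1),
        (t ^ (-s)) ^ ((σ : Matrix (Fin 2) (Fin 2) ℤ) 1 0) *
          (t ^ r) ^ ((σ : Matrix (Fin 2) (Fin 2) ℤ) 1 1)) : ℂ × ℂ)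
        ≠ ((-1 : ℂ) ^ s * t ^ (-s), (-1 : ℂ) ^ r * t ^ r) := by
  intro σ heq
  rw [Prod.mk.injEq] at heq
  obtain ⟨h1, h2⟩ := heq
  rw [← zpow_mul, ← zpow_mul, ← zpow_add₀ ht] at h1 h2
  exact h ⟨aux_even_of_zpow_eq t ht htn _ _ _ h2,
    aux_even_of_zpow_eq t ht htn _ _ _ h1⟩
end

section
/- Let r, s, u, v be integers with r·v − s·u = 2, r = 2r', s = 2s', gcd(r', s') = 1, and let q be a nonzero complex number that is not a root of unity. Then: (a) the set {(α, β) ∈ (ℂ∖{0})² : α^r β^s = 1 and α^u β^v = q²} equals {(q^(−s), q^r), ((−1)^v q^(−s), (−1)^u q^r)} and these two pairs are distinct; (b) the pair (q^(−s), q^r) satisfies (q^(−s))^(r') (q^r)^(s') = 1; (c) the pair ((−1)^v q^(−s), (−1)^u q^r) satisfies ((−1)^v q^(−s))^(r') ((−1)^u q^r)^(s') = −1. In particular, ((−1)^v q^(−s), (−1)^u q^r) is the unique solution (α, β) of the two equations with α^(r') β^(s') ≠ 1. -/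
private lemma comb2 (q : ℂ) (hq : q ≠ 0) (a b c d : ℤ) :
    (q ^ a) ^ b * (q ^ c) ^ d = q ^ (a * b + c * d) := by
  rw [← zpow_mul, ← zpow_mul, ← zpow_add₀ hq]

private lemma comb4 (α β : ℂ) (hα : α ≠ 0) (hβ : β ≠ 0) (a b c d e f : ℤ) :
    (α ^ a * β ^ b) ^ e * (α ^ c * β ^ d) ^ f
      = α ^ (a * e + c * f) * β ^ (b * e + d * f) := by
  rw [mul_zpow, mul_zpow, ← zpow_mul, ← zpow_mul, ← zpow_mul, ← zpow_mul,
    zpow_add₀ hα, zpow_add₀ hβ]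
  ring

private lemma negone_even (n : ℤ) : ((-1 : ℂ)) ^ (2 * n) = 1 := by
  rw [zpow_mul]; norm_num

private lemma negone_ne : ((-1 : ℂ)) ≠ 0 := by norm_num

private lemma negone_neg (u : ℤ) : ((-1 : ℂ)) ^ (-u) = (-1 : ℂ) ^ u := by
  rw [zpow_neg, ← inv_zpow, inv_neg_one]

private lemma even_of_negone_eq_one (v : ℤ) (h : ((-1 : ℂ)) ^ v = 1) : Even v := by
  rcases Int.even_or_odd v with he | ho
  · exact he
  · obtain ⟨k, hk⟩ := ho
    rw [hk, zpow_add₀ negone_ne, negone_even] at h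
    norm_num at h

private lemma solve_aux (r s r' s' u v : ℤ) (h1' : r' * v - s' * u = 1)
    (hr : r = 2 * r') (hs : s = 2 * s') (q α β : ℂ) (hq : q ≠ 0)
    (hα : α ≠ 0) (hβ : β ≠ 0) (e1 : α ^ r * β ^ s = 1) (e2 : α ^ u * β ^ v = q ^ 2) :
    (α ^ r' * β ^ s' = 1 ∧ α = q ^ (-s) ∧ β = q ^ r) ∨
    (α ^ r' * β ^ s' = -1 ∧ α = (-1 : ℂ) ^ v * q ^ (-s) ∧ β = (-1 : ℂ) ^ u * q ^ r) := by
  set A := α ^ r' * β ^ s' with hA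
  have hAA : A * A = 1 := by
    have h : A * A = α ^ (r' + r') * β ^ (s' + s') := by
      rw [zpow_add₀ hα, zpow_add₀ hβ, hA]; ring
    rw [h, show r' + r' = r by omega, show s' + s' = s by omega]
    exact e1
  have hq2 : q ^ (2 : ℕ) = q ^ ((2 : ℕ) : ℤ) := (zpow_natCast q 2).symm
  have hαf : A ^ v * (q ^ 2) ^ (-s') = α := by
    rw [← e2, hA, comb4 α β hα hβ r' s' u v v (-s'),
      show r' * v + u * (-s') = 1 by linarith,
      show s' * v + v * (-s') = 0 by ring, zpow_one, zpow_zero, mul_one]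
  have hβf : A ^ (-u) * (q ^ 2) ^ r' = β := by
    rw [← e2, hA, comb4 α β hα hβ r' s' u v (-u) r',
      show r' * (-u) + u * r' = 0 by ring,
      show s' * (-u) + v * r' = 1 by linarith, zpow_one, zpow_zero, one_mul]
  have hqs : (q ^ 2) ^ (-s') = q ^ (-s) := by
    rw [hq2, ← zpow_mul]
    congr 1
    push_cast
    omega
  have hqr : (q ^ 2) ^ r' = q ^ r := by
    rw [hq2, ← zpow_mul]
    congr 1
    push_cast
    omega
  rcases mul_self_eq_one_iff.mp hAA with h1 | h1
  · left
    refine ⟨h1, ?_, ?_⟩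
    · rw [← hαf, h1, one_zpow, one_mul, hqs]
    · rw [← hβf, h1, one_zpow, one_mul, hqr]
  · right
    refine ⟨h1, ?_, ?_⟩
    · rw [← hαf, h1, hqs]
    · rw [← hβf, h1, hqr, negone_neg]

/-- Let `r*v - s*u = 2`, `r = 2r'`, `s = 2s'` with `gcd(r', s') = 1`,
and let `q` be nonzero and not a root of unity. Then (a) the set of pairs `(α, β)` of
nonzero complex numbers with `α^r β^s = 1` and `α^u β^v = q^2` equals
`{(q^(-s), q^r), ((-1)^v q^(-s), (-1)^u q^r)}` and these pairs are distinct;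
(b) `(q^(-s))^r' (q^r)^s' = 1`; (c) `((-1)^v q^(-s))^r' ((-1)^u q^r)^s' = -1`.
In particular `((-1)^v q^(-s), (-1)^u q^r)` is the unique solution with
`α^r' β^s' ≠ 1`. -/
theorem weight_constants_det_two_gcd_two (r s r' s' u v : ℤ) (h2 : r * v - s * u = 2)
    (hr : r = 2 * r') (hs : s = 2 * s') (hg : Int.gcd r' s' = 1)
    (q : ℂ) (hq : q ≠ 0) (hqn : ∀ n : ℤ, n ≠ 0 → q ^ n ≠ 1) :
    ({p : ℂ × ℂ | p.1 ≠ 0 ∧ p.2 ≠ 0 ∧ p.1 ^ r * p.2 ^ s = 1 ∧ p.1 ^ u * p.2 ^ v = q ^ 2}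
      = {(q ^ (-s), q ^ r), ((-1 : ℂ) ^ v * q ^ (-s), (-1 : ℂ) ^ u * q ^ r)}) ∧
    ((q ^ (-s), q ^ r) : ℂ × ℂ) ≠ ((-1 : ℂ) ^ v * q ^ (-s), (-1 : ℂ) ^ u * q ^ r) ∧
    (q ^ (-s)) ^ r' * (q ^ r) ^ s' = 1 ∧
    ((-1 : ℂ) ^ v * q ^ (-s)) ^ r' * ((-1 : ℂ) ^ u * q ^ r) ^ s' = -1 ∧
    (∀ α β : ℂ, α ≠ 0 → β ≠ 0 → α ^ r * β ^ s = 1 → α ^ u * β ^ v = q ^ 2 →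
      α ^ r' * β ^ s' ≠ 1 →
      (α, β) = ((-1 : ℂ) ^ v * q ^ (-s), (-1 : ℂ) ^ u * q ^ r)) := by
  have h1' : r' * v - s' * u = 1 := by
    rw [hr, hs] at h2; linarith
  have hq2 : q ^ (2 : ℕ) = q ^ ((2 : ℕ) : ℤ) := (zpow_natCast q 2).symm
  have hqsne : q ^ (-s) ≠ 0 := zpow_ne_zero _ hq
  have hqrne : q ^ r ≠ 0 := zpow_ne_zero _ hq
  have hεv : ((-1 : ℂ)) ^ v ≠ 0 := zpow_ne_zero _ negone_ne
  have hεu : ((-1 : ℂ)) ^ u ≠ 0 := zpow_ne_zero _ negone_ne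
  -- membership of the two pairs
  have mem1 : (q ^ (-s)) ^ r * (q ^ r) ^ s = 1 := by
    rw [comb2 q hq, show -s * r + r * s = 0 by ring, zpow_zero]
  have mem1' : (q ^ (-s)) ^ u * (q ^ r) ^ v = q ^ 2 := by
    rw [comb2 q hq, show -s * u + r * v = 2 by linarith, hq2]
    norm_num
  have mem2 : ((-1 : ℂ) ^ v * q ^ (-s)) ^ r * ((-1 : ℂ) ^ u * q ^ r) ^ s = 1 := by
    rw [comb4 _ _ negone_ne hq, show v * r + u * s = 2 * (v * r' + u * s') by
        rw [hr, hs]; ring,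
      show -s * r + r * s = 0 by ring, zpow_zero, negone_even, one_mul]
  have mem2' : ((-1 : ℂ) ^ v * q ^ (-s)) ^ u * ((-1 : ℂ) ^ u * q ^ r) ^ v = q ^ 2 := by
    rw [comb4 _ _ negone_ne hq, show v * u + u * v = 2 * (u * v) by ring,
      show -s * u + r * v = 2 by linarith, negone_even, one_mul, hq2]
    norm_num
  refine ⟨?_, ?_, ?_, ?_, ?_⟩
  · ext ⟨α, β⟩
    simp only [Set.mem_setOf_eq, Set.mem_insert_iff, Set.mem_singleton_iff, Prod.mk.injEq]
    constructor
    · rintro ⟨hα, hβ, e1, e2⟩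
      rcases solve_aux r s r' s' u v h1' hr hs q α β hq hα hβ e1 e2 with
        ⟨_, h⟩ | ⟨_, h⟩
      · exact Or.inl h
      · exact Or.inr h
    · rintro (⟨h1, h2'⟩ | ⟨h1, h2'⟩) <;> subst h1 <;> subst h2'
      · exact ⟨hqsne, hqrne, mem1, mem1'⟩
      · exact ⟨mul_ne_zero hεv hqsne, mul_ne_zero hεu hqrne, mem2, mem2'⟩
  · intro h
    rw [Prod.mk.injEq] at h
    have hv : Even v := by
      apply even_of_negone_eq_one
      have h1 : (1 : ℂ) * q ^ (-s) = (-1 : ℂ) ^ v * q ^ (-s) := by rw [one_mul]; exact h.1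
      exact (mul_right_cancel₀ hqsne h1).symm
    have hu : Even u := by
      apply even_of_negone_eq_one
      have h1 : (1 : ℂ) * q ^ r = (-1 : ℂ) ^ u * q ^ r := by rw [one_mul]; exact h.2
      exact (mul_right_cancel₀ hqrne h1).symm
    have : Even (r' * v - s' * u) := ((hv.mul_left r').sub (hu.mul_left s'))
    rw [h1'] at this
    obtain ⟨k, hk⟩ := this
    omega
  · rw [comb2 q hq, show -s * r' + r * s' = 0 by rw [hr, hs]; ring, zpow_zero]
  · rw [comb4 _ _ negone_ne hq, show -s * r' + r * s' = 0 by rw [hr, hs]; ring,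
      zpow_zero, mul_one, show v * r' + u * s' = 1 + 2 * (s' * u) by linarith,
      zpow_add₀ negone_ne, negone_even, mul_one, zpow_one]
  · intro α β hα hβ e1 e2 hne
    rcases solve_aux r s r' s' u v h1' hr hs q α β hq hα hβ e1 e2 with
      ⟨hA, _⟩ | ⟨_, h3, h4⟩
    · exact absurd hA hne
    · rw [h3, h4]
end

section
/- Let r, s, u, v be integers with r·v − s·u = 4 and gcd(r, s) = 1, let q be a nonzero complex number that is not a root of unity, and let ζ be a complex number with ζ² = q. Then the set {(α, β) ∈ (ℂ∖{0})² : α² = q^(−s), β² = q^r, α^r β^s = 1, and α^u β^v = q²} equals {(ζ^(−s), ζ^r), ((−1)^s ζ^(−s), (−1)^r ζ^r)}, and these two pairs are distinct. -/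
/-- Let `r*v - s*u = 4`, `gcd(r, s) = 1`, `q` nonzero and not a root
of unity, and `ζ² = q`. Then the set of pairs `(α, β)` of nonzero complex numbers with
`α² = q^(-s)`, `β² = q^r`, `α^r β^s = 1`, and `α^u β^v = q²` equals
`{(ζ^(-s), ζ^r), ((-1)^s ζ^(-s), (-1)^r ζ^r)}`, and these two pairs are distinct. -/
theorem weight_constants_det_four_gcd_one (r s u v : ℤ) (h4 : r * v - s * u = 4)
    (hg : Int.gcd r s = 1) (q : ℂ) (hq : q ≠ 0) (hqn : ∀ n : ℤ, n ≠ 0 → q ^ n ≠ 1)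
    (ζ : ℂ) (hζ : ζ ^ 2 = q) :
    ({p : ℂ × ℂ | p.1 ≠ 0 ∧ p.2 ≠ 0 ∧ p.1 ^ 2 = q ^ (-s) ∧ p.2 ^ 2 = q ^ r ∧
        p.1 ^ r * p.2 ^ s = 1 ∧ p.1 ^ u * p.2 ^ v = q ^ 2}
      = {(ζ ^ (-s), ζ ^ r), ((-1 : ℂ) ^ s * ζ ^ (-s), (-1 : ℂ) ^ r * ζ ^ r)}) ∧
    ((ζ ^ (-s), ζ ^ r) : ℂ × ℂ) ≠ ((-1 : ℂ) ^ s * ζ ^ (-s), (-1 : ℂ) ^ r * ζ ^ r) := by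
  have hz : ζ ≠ 0 := by
    intro h; apply hq; rw [← hζ, h]; ring
  have hzs : ζ ^ (-s) ≠ 0 := zpow_ne_zero _ hz
  have hzr : ζ ^ r ≠ 0 := zpow_ne_zero _ hz
  have hne : (-1 : ℂ) ≠ 1 := by norm_num
  -- not both r and s are even
  have hpar : Odd r ∨ Odd s := by
    by_contra h
    push_neg at h
    obtain ⟨h1, h2⟩ := h
    rw [Int.not_odd_iff_even] at h1 h2
    obtain ⟨a, ha⟩ := h1
    obtain ⟨b, hb⟩ := h2
    have hra : r = 2 * a := by omega
    have hsb : s = 2 * b := by omega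
    rw [hra, hsb, Int.gcd_mul_left] at hg
    simp at hg
  -- basic zpow computations
  have pow2 : ∀ m : ℤ, (ζ ^ m) ^ 2 = ζ ^ (2 * m) := by
    intro m
    rw [← zpow_natCast (ζ ^ m) 2, ← zpow_mul]
    norm_num [mul_comm]
  have e1 : (ζ ^ (-s)) ^ 2 = q ^ (-s) := by
    rw [pow2, ← hζ, ← zpow_natCast ζ 2, ← zpow_mul]
    norm_num
  have e2 : (ζ ^ r) ^ 2 = q ^ r := by
    rw [pow2, ← hζ, ← zpow_natCast ζ 2, ← zpow_mul]
    norm_num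
  have e3 : (ζ ^ (-s)) ^ r * (ζ ^ r) ^ s = 1 := by
    rw [← zpow_mul, ← zpow_mul, ← zpow_add₀ hz]
    have h0 : -s * r + r * s = 0 := by ring
    rw [h0, zpow_zero]
  have e4 : (ζ ^ (-s)) ^ u * (ζ ^ r) ^ v = q ^ 2 := by
    rw [← zpow_mul, ← zpow_mul, ← zpow_add₀ hz, ← hζ]
    have h1 : (ζ ^ 2) ^ 2 = ζ ^ (4 : ℤ) := by
      rw [← pow_mul, ← zpow_natCast]; norm_num
    rw [h1]
    congr 1; linear_combination h4
  have sq_cases : ∀ x y : ℂ, x ^ 2 = y ^ 2 → x = y ∨ x = -y := by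
    intro x y h
    have h0 : (x - y) * (x + y) = 0 := by linear_combination h
    rcases mul_eq_zero.mp h0 with h' | h'
    · left; linear_combination h'
    · right; linear_combination h'
  have neg_one_sq' : ∀ m : ℤ, ((-1 : ℂ) ^ m) ^ 2 = 1 := by
    intro m
    rcases Int.even_or_odd m with h | h
    · rw [h.neg_one_zpow]; ring
    · rw [h.neg_one_zpow]; ring
  have even_of_pow : ∀ m : ℤ, (-1 : ℂ) ^ m = 1 → Even m := by
    intro m h
    rcases Int.even_or_odd m with h' | h'
    · exact h'
    · rw [h'.neg_one_zpow] at h; exact absurd h hne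
  constructor
  · ext p
    simp only [Set.mem_setOf_eq, Set.mem_insert_iff, Set.mem_singleton_iff]
    constructor
    · rintro ⟨ha0, hb0, ha2, hb2, h3, -⟩
      have hA : p.1 = ζ ^ (-s) ∨ p.1 = -ζ ^ (-s) :=
        sq_cases _ _ (by rw [ha2, e1])
      have hB : p.2 = ζ ^ r ∨ p.2 = -ζ ^ r :=
        sq_cases _ _ (by rw [hb2, e2])
      rcases hA with hA | hA <;> rcases hB with hB | hB
      · left; exact Prod.ext hA hB
      · -- p = (ζ^(-s), -ζ^r): (-1)^s = 1, so s even, hence r odd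
        rw [hA, hB, show (-ζ ^ r) = (-1 : ℂ) * ζ ^ r from by ring, mul_zpow] at h3
        have h3' : (-1 : ℂ) ^ s = 1 := by
          calc (-1 : ℂ) ^ s
              = (-1 : ℂ) ^ s * ((ζ ^ (-s)) ^ r * (ζ ^ r) ^ s) := by rw [e3, mul_one]
            _ = (ζ ^ (-s)) ^ r * ((-1 : ℂ) ^ s * (ζ ^ r) ^ s) := by ring
            _ = 1 := h3
        have hse : Even s := even_of_pow s h3'
        have hro : Odd r := by
          rcases hpar with h | h
          · exact h
          · exact absurd hse (Int.not_even_iff_odd.mpr h)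
        right
        exact Prod.ext (by rw [hA, hse.neg_one_zpow, one_mul])
          (by rw [hB, hro.neg_one_zpow]; ring)
      · -- p = (-ζ^(-s), ζ^r): (-1)^r = 1, so r even, hence s odd
        rw [hA, hB, show (-ζ ^ (-s)) = (-1 : ℂ) * ζ ^ (-s) from by ring, mul_zpow] at h3
        have h3' : (-1 : ℂ) ^ r = 1 := by
          calc (-1 : ℂ) ^ r
              = (-1 : ℂ) ^ r * ((ζ ^ (-s)) ^ r * (ζ ^ r) ^ s) := by rw [e3, mul_one]
            _ = (-1 : ℂ) ^ r * (ζ ^ (-s)) ^ r * (ζ ^ r) ^ s := by ring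
            _ = 1 := h3
        have hre : Even r := even_of_pow r h3'
        have hso : Odd s := by
          rcases hpar with h | h
          · exact absurd hre (Int.not_even_iff_odd.mpr h)
          · exact h
        right
        exact Prod.ext (by rw [hA, hso.neg_one_zpow]; ring)
          (by rw [hB, hre.neg_one_zpow, one_mul])
      · -- p = (-ζ^(-s), -ζ^r)
        rw [hA, hB, show (-ζ ^ (-s)) = (-1 : ℂ) * ζ ^ (-s) from by ring,
          show (-ζ ^ r) = (-1 : ℂ) * ζ ^ r from by ring, mul_zpow, mul_zpow] at h3
        have h3' : (-1 : ℂ) ^ r * (-1 : ℂ) ^ s = 1 := by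
          calc (-1 : ℂ) ^ r * (-1 : ℂ) ^ s
              = (-1 : ℂ) ^ r * (-1 : ℂ) ^ s * ((ζ ^ (-s)) ^ r * (ζ ^ r) ^ s) := by
                rw [e3, mul_one]
            _ = (-1 : ℂ) ^ r * (ζ ^ (-s)) ^ r * ((-1 : ℂ) ^ s * (ζ ^ r) ^ s) := by ring
            _ = 1 := h3
        have hboth : Odd r ∧ Odd s := by
          rcases Int.even_or_odd r with h | h <;> rcases Int.even_or_odd s with h' | h'
          · exfalso
            rcases hpar with hh | hh
            · exact Int.not_even_iff_odd.mpr hh h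
            · exact Int.not_even_iff_odd.mpr hh h'
          · exfalso
            rw [h.neg_one_zpow, h'.neg_one_zpow] at h3'
            norm_num at h3'
          · exfalso
            rw [h.neg_one_zpow, h'.neg_one_zpow] at h3'
            norm_num at h3'
          · exact ⟨h, h'⟩
        right
        exact Prod.ext (by rw [hA, hboth.2.neg_one_zpow]; ring)
          (by rw [hB, hboth.1.neg_one_zpow]; ring)
    · rintro (h | h) <;> rw [h]
      · exact ⟨hzs, hzr, e1, e2, e3, e4⟩
      · refine ⟨mul_ne_zero (zpow_ne_zero _ (by norm_num)) hzs,
          mul_ne_zero (zpow_ne_zero _ (by norm_num)) hzr, ?_, ?_, ?_, ?_⟩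
        · rw [mul_pow, neg_one_sq', one_mul]; exact e1
        · rw [mul_pow, neg_one_sq', one_mul]; exact e2
        · rw [mul_zpow, mul_zpow, ← zpow_mul (-1 : ℂ) s r, ← zpow_mul (-1 : ℂ) r s]
          have hev : Even (s * r + r * s) := ⟨s * r, by ring⟩
          calc (-1 : ℂ) ^ (s * r) * (ζ ^ (-s)) ^ r * ((-1 : ℂ) ^ (r * s) * (ζ ^ r) ^ s)
              = (-1 : ℂ) ^ (s * r + r * s) * ((ζ ^ (-s)) ^ r * (ζ ^ r) ^ s) := by
                rw [zpow_add₀ (by norm_num : (-1 : ℂ) ≠ 0)]; ring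
            _ = 1 := by rw [hev.neg_one_zpow, e3, one_mul]
        · rw [mul_zpow, mul_zpow, ← zpow_mul (-1 : ℂ) s u, ← zpow_mul (-1 : ℂ) r v]
          have hev : Even (s * u + r * v) := ⟨s * u + 2, by linarith⟩
          calc (-1 : ℂ) ^ (s * u) * (ζ ^ (-s)) ^ u * ((-1 : ℂ) ^ (r * v) * (ζ ^ r) ^ v)
              = (-1 : ℂ) ^ (s * u + r * v) * ((ζ ^ (-s)) ^ u * (ζ ^ r) ^ v) := by
                rw [zpow_add₀ (by norm_num : (-1 : ℂ) ≠ 0)]; ring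
            _ = q ^ 2 := by rw [hev.neg_one_zpow, e4, one_mul]
  · intro h
    rw [Prod.ext_iff] at h
    obtain ⟨h1, h2⟩ := h
    simp only at h1 h2
    have hs1 : (1 : ℂ) = (-1 : ℂ) ^ s :=
      mul_right_cancel₀ hzs (by linear_combination h1)
    have hr1 : (1 : ℂ) = (-1 : ℂ) ^ r :=
      mul_right_cancel₀ hzr (by linear_combination h2)
    rcases hpar with h | h
    · rw [h.neg_one_zpow] at hr1; exact hne hr1.symm
    · rw [h.neg_one_zpow] at hs1; exact hne hs1.symm
end

section
/- Let r, s, u, v be integers with r·v − s·u = 4, r = 2r', s = 2s', gcd(r', s') = 1, and let q be a nonzero complex number that is not a root of unity. Then there exists a pair (α, β) of nonzero complex numbers with α² = q^(−s), β² = q^r, α^r β^s = 1, α^u β^v = q², and α^(r') β^(s') ≠ 1 if and only if u and v are both even. Moreover, if u and v are both even, the set of such pairs (α, β) equals {(−q^(−s'), (−1)^(r'+1) q^(r')), ((−1)^(s'+1) q^(−s'), −q^(r'))}, and these two pairs are distinct. -/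
private lemma negone_zpow_or (n : ℤ) : ((-1:ℂ)) ^ n = 1 ∨ ((-1:ℂ)) ^ n = -1 := by
  rcases Int.even_or_odd n with h | h
  · exact Or.inl h.neg_one_zpow
  · exact Or.inr h.neg_one_zpow

private lemma negone_zpow_eq_one_iff (n : ℤ) : ((-1:ℂ)) ^ n = 1 ↔ Even n := by
  rcases Int.even_or_odd n with h | h
  · simp [h.neg_one_zpow, h]
  · rw [h.neg_one_zpow]
    simp [Int.not_even_iff_odd.mpr h]
    norm_num

private lemma negone_zpow_eq_negone_iff (n : ℤ) : ((-1:ℂ)) ^ n = -1 ↔ Odd n := by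
  rcases Int.even_or_odd n with h | h
  · rw [h.neg_one_zpow]
    simp [Int.not_odd_iff_even.mpr h]
    norm_num
  · simp [h.neg_one_zpow, h]

private lemma pm_zpow_or {e : ℂ} (he : e = 1 ∨ e = -1) (n : ℤ) :
    e ^ n = 1 ∨ e ^ n = -1 := by
  rcases he with rfl | rfl
  · simp
  · exact negone_zpow_or n

private lemma pm_ne_zero {e : ℂ} (he : e = 1 ∨ e = -1) : e ≠ 0 := by
  rcases he with rfl | rfl <;> norm_num

private lemma pm_sq {e : ℂ} (he : e = 1 ∨ e = -1) : e ^ 2 = 1 := by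
  rcases he with rfl | rfl <;> norm_num

private lemma pm_sq_z {e : ℂ} (he : e = 1 ∨ e = -1) : e ^ (2:ℤ) = 1 := by
  rcases he with rfl | rfl <;> norm_num

/-- The key characterization of solutions. -/
private lemma char_lemma (r' s' u v : ℤ) (h2 : r' * v - s' * u = 2)
    (q : ℂ) (hq : q ≠ 0) (α β : ℂ) :
    (α ≠ 0 ∧ β ≠ 0 ∧ α ^ 2 = q ^ (-(2*s')) ∧ β ^ 2 = q ^ (2*r') ∧
      α ^ (2*r') * β ^ (2*s') = 1 ∧ α ^ u * β ^ v = q ^ 2 ∧ α ^ r' * β ^ s' ≠ 1)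
    ↔ ∃ e d : ℂ, (e = 1 ∨ e = -1) ∧ (d = 1 ∨ d = -1) ∧
        α = e * q ^ (-s' : ℤ) ∧ β = d * q ^ (r' : ℤ) ∧
        e ^ u * d ^ v = 1 ∧ e ^ r' * d ^ s' = -1 := by
  set A : ℂ := q ^ (-s' : ℤ) with hA_def
  set B : ℂ := q ^ (r' : ℤ) with hB_def
  have hA : A ≠ 0 := zpow_ne_zero _ hq
  have hB : B ≠ 0 := zpow_ne_zero _ hq
  have hq2 : q ^ (2:ℤ) = q ^ 2 := by rw [← zpow_natCast]; norm_num
  have hA2 : A ^ 2 = q ^ (-(2*s')) := by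
    rw [hA_def, ← zpow_natCast (q ^ (-s' : ℤ)) 2, ← zpow_mul]
    congr 1; push_cast; ring
  have hB2 : B ^ 2 = q ^ (2*r') := by
    rw [hB_def, ← zpow_natCast (q ^ (r' : ℤ)) 2, ← zpow_mul]
    congr 1; push_cast; ring
  have key : ∀ (e d : ℂ) (a b : ℤ),
      (e * A) ^ a * (d * B) ^ b = (e ^ a * d ^ b) * q ^ (-s' * a + r' * b) := by
    intro e d a b
    rw [mul_zpow, mul_zpow, zpow_add₀ hq, hA_def, hB_def, ← zpow_mul, ← zpow_mul]
    ring
  constructor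
  · rintro ⟨ha0, hb0, ha2, hb2, -, huv, hrs⟩
    rw [← hA2] at ha2
    rw [← hB2] at hb2
    obtain ⟨e, heo, hae⟩ : ∃ e : ℂ, (e = 1 ∨ e = -1) ∧ α = e * A := by
      rcases sq_eq_sq_iff_eq_or_eq_neg.mp ha2 with h | h
      · exact ⟨1, Or.inl rfl, by rw [h, one_mul]⟩
      · exact ⟨-1, Or.inr rfl, by rw [h]; ring⟩
    obtain ⟨d, hdo, hbe⟩ : ∃ d : ℂ, (d = 1 ∨ d = -1) ∧ β = d * B := by
      rcases sq_eq_sq_iff_eq_or_eq_neg.mp hb2 with h | h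
      · exact ⟨1, Or.inl rfl, by rw [h, one_mul]⟩
      · exact ⟨-1, Or.inr rfl, by rw [h]; ring⟩
    refine ⟨e, d, heo, hdo, hae, hbe, ?_, ?_⟩
    · rw [hae, hbe, key, show -s' * u + r' * v = (2:ℤ) by linarith, hq2] at huv
      exact mul_right_cancel₀ (pow_ne_zero 2 hq) (by rw [one_mul]; exact huv)
    · rw [hae, hbe, key, show -s' * r' + r' * s' = (0:ℤ) by ring, zpow_zero, mul_one] at hrs
      rcases pm_zpow_or heo r' with h | h <;> rcases pm_zpow_or hdo s' with h' | h' <;>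
        rw [h, h'] <;> rw [h, h'] at hrs <;> norm_num at *
  · rintro ⟨e, d, heo, hdo, rfl, rfl, h1, hm1⟩
    have he0 := pm_ne_zero heo
    have hd0 := pm_ne_zero hdo
    refine ⟨mul_ne_zero he0 hA, mul_ne_zero hd0 hB, ?_, ?_, ?_, ?_, ?_⟩
    · rw [mul_pow, pm_sq heo, one_mul, hA2]
    · rw [mul_pow, pm_sq hdo, one_mul, hB2]
    · rw [key, show -s' * (2*r') + r' * (2*s') = (0:ℤ) by ring, zpow_zero, mul_one,
        show (2*r' : ℤ) = 2 * r' from rfl, zpow_mul, zpow_mul, pm_sq_z heo, pm_sq_z hdo,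
        one_zpow, one_zpow, one_mul]
    · rw [key, show -s' * u + r' * v = (2:ℤ) by linarith, h1, one_mul, hq2]
    · rw [key, show -s' * r' + r' * s' = (0:ℤ) by ring, zpow_zero, mul_one, hm1]
      norm_num


/-- Let `r*v - s*u = 4`, `r = 2r'`, `s = 2s'` with `gcd(r', s') = 1`,
and let `q` be nonzero and not a root of unity. There exists a pair `(α, β)` of
nonzero complex numbers with `α² = q^(-s)`, `β² = q^r`, `α^r β^s = 1`,
`α^u β^v = q²`, and `α^r' β^s' ≠ 1` iff `u` and `v` are both even; and in that case
the set of such pairs equals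
`{(-q^(-s'), (-1)^(r'+1) q^r'), ((-1)^(s'+1) q^(-s'), -q^r')}`, whose two listed
elements are distinct. -/
theorem weight_constants_det_four_gcd_two (r s r' s' u v : ℤ) (h4 : r * v - s * u = 4)
    (hr : r = 2 * r') (hs : s = 2 * s') (hg : Int.gcd r' s' = 1)
    (q : ℂ) (hq : q ≠ 0) (hqn : ∀ n : ℤ, n ≠ 0 → q ^ n ≠ 1) :
    ((∃ α β : ℂ, α ≠ 0 ∧ β ≠ 0 ∧ α ^ 2 = q ^ (-s) ∧ β ^ 2 = q ^ r ∧
        α ^ r * β ^ s = 1 ∧ α ^ u * β ^ v = q ^ 2 ∧ α ^ r' * β ^ s' ≠ 1)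
      ↔ (Even u ∧ Even v)) ∧
    (Even u → Even v →
      ({p : ℂ × ℂ | p.1 ≠ 0 ∧ p.2 ≠ 0 ∧ p.1 ^ 2 = q ^ (-s) ∧ p.2 ^ 2 = q ^ r ∧
          p.1 ^ r * p.2 ^ s = 1 ∧ p.1 ^ u * p.2 ^ v = q ^ 2 ∧ p.1 ^ r' * p.2 ^ s' ≠ 1}
        = {(-q ^ (-s'), (-1 : ℂ) ^ (r' + 1) * q ^ r'),
            ((-1 : ℂ) ^ (s' + 1) * q ^ (-s'), -q ^ r')}) ∧
      ((-q ^ (-s'), (-1 : ℂ) ^ (r' + 1) * q ^ r') : ℂ × ℂ)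
        ≠ ((-1 : ℂ) ^ (s' + 1) * q ^ (-s'), -q ^ r')) := by
  subst hr; subst hs
  have h2 : r' * v - s' * u = 2 := by linarith
  have hne : ¬ (Even r' ∧ Even s') := by
    rintro ⟨⟨a, ha⟩, ⟨b, hb⟩⟩
    have hdvd : (2:ℤ) ∣ (Int.gcd r' s' : ℤ) := Int.dvd_coe_gcd ⟨a, by omega⟩ ⟨b, by omega⟩
    rw [hg] at hdvd; norm_num at hdvd
  have hm1ne : ((-1:ℂ)) ≠ 0 := by norm_num
  refine ⟨⟨?_, ?_⟩, fun hu hv => ⟨?_, ?_⟩⟩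
  · -- iff, forward
    rintro ⟨α, β, hcond⟩
    obtain ⟨e, d, heo, hdo, -, -, h1, hm1⟩ := (char_lemma r' s' u v h2 q hq α β).mp hcond
    rcases heo with rfl | rfl <;> rcases hdo with rfl | rfl
    · rw [one_zpow, one_zpow] at hm1; norm_num at hm1
    · -- e=1, d=-1 : Odd s', Even v
      rw [one_zpow, one_mul] at h1 hm1
      have hv : Even v := (negone_zpow_eq_one_iff v).mp h1
      have hos : Odd s' := (negone_zpow_eq_negone_iff s').mp hm1
      refine ⟨?_, hv⟩
      have h6 : Even (s' * u) := by
        have h5 : s' * u = r' * v - 2 := by linarith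
        rw [h5]; exact (hv.mul_left r').sub even_two
      rcases Int.even_mul.mp h6 with h | h
      · exact absurd h (Int.not_even_iff_odd.mpr hos)
      · exact h
    · -- e=-1, d=1 : Odd r', Even u
      rw [one_zpow, mul_one] at h1 hm1
      have hu : Even u := (negone_zpow_eq_one_iff u).mp h1
      have hor : Odd r' := (negone_zpow_eq_negone_iff r').mp hm1
      refine ⟨hu, ?_⟩
      have h6 : Even (r' * v) := by
        have h5 : r' * v = 2 + s' * u := by linarith
        rw [h5]; exact even_two.add (hu.mul_left s')
      rcases Int.even_mul.mp h6 with h | h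
      · exact absurd h (Int.not_even_iff_odd.mpr hor)
      · exact h
    · -- e=-1, d=-1
      rcases negone_zpow_or u with h | h
      · refine ⟨(negone_zpow_eq_one_iff u).mp h, ?_⟩
        rw [h, one_mul] at h1
        exact (negone_zpow_eq_one_iff v).mp h1
      · exfalso
        rw [h] at h1
        have hv' : ((-1:ℂ)) ^ v = -1 := by linear_combination -h1
        have hou : Odd u := (negone_zpow_eq_negone_iff u).mp h
        have hov : Odd v := (negone_zpow_eq_negone_iff v).mp hv'
        have h8 : Even (r' * v - s' * u) := by rw [h2]; exact even_two
        rcases Int.even_or_odd r' with her | hor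
        · rw [her.neg_one_zpow, one_mul] at hm1
          have hos : Odd s' := (negone_zpow_eq_negone_iff s').mp hm1
          have h6 : Even (r' * v) := her.mul_right v
          have h7 : Odd (s' * u) := hos.mul hou
          exact (Int.not_even_iff_odd.mpr h7) ((Int.even_sub.mp h8).mp h6)
        · rw [hor.neg_one_zpow] at hm1
          have hes : Even s' := (negone_zpow_eq_one_iff s').mp (by linear_combination -hm1)
          have h6 : Odd (r' * v) := hor.mul hov
          have h7 : Even (s' * u) := hes.mul_right u
          exact (Int.not_even_iff_odd.mpr h6) ((Int.even_sub.mp h8).mpr h7)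
  · -- iff, backward
    rintro ⟨hu, hv⟩
    rcases Int.even_or_odd r' with her | hor
    · have hos : Odd s' := by
        rcases Int.even_or_odd s' with h | h
        · exact absurd ⟨her, h⟩ hne
        · exact h
      exact ⟨1 * q ^ (-s' : ℤ), (-1) * q ^ (r' : ℤ),
        (char_lemma r' s' u v h2 q hq _ _).mpr ⟨1, -1, Or.inl rfl, Or.inr rfl, rfl, rfl,
          by rw [one_zpow, one_mul, (negone_zpow_eq_one_iff v).mpr hv],
          by rw [one_zpow, one_mul, (negone_zpow_eq_negone_iff s').mpr hos]⟩⟩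
    · exact ⟨(-1) * q ^ (-s' : ℤ), 1 * q ^ (r' : ℤ),
        (char_lemma r' s' u v h2 q hq _ _).mpr ⟨-1, 1, Or.inr rfl, Or.inl rfl, rfl, rfl,
          by rw [one_zpow, mul_one, (negone_zpow_eq_one_iff u).mpr hu],
          by rw [one_zpow, mul_one, (negone_zpow_eq_negone_iff r').mpr hor]⟩⟩
  · -- set equality
    ext ⟨α, β⟩
    simp only [Set.mem_setOf_eq, Set.mem_insert_iff, Set.mem_singleton_iff, Prod.mk.injEq]
    rw [char_lemma r' s' u v h2 q hq α β]
    constructor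
    · rintro ⟨e, d, heo, hdo, rfl, rfl, -, hm1⟩
      rcases heo with rfl | rfl <;> rcases hdo with rfl | rfl
      · rw [one_zpow, one_zpow] at hm1; norm_num at hm1
      · -- e=1, d=-1 : Odd s' ; right
        rw [one_zpow, one_mul] at hm1
        have hos : Odd s' := (negone_zpow_eq_negone_iff s').mp hm1
        right
        refine ⟨?_, by ring⟩
        rw [(negone_zpow_eq_one_iff _).mpr hos.add_one, one_mul]
      · -- e=-1, d=1 : Odd r' ; left
        rw [one_zpow, mul_one] at hm1
        have hor : Odd r' := (negone_zpow_eq_negone_iff r').mp hm1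
        left
        refine ⟨by ring, ?_⟩
        rw [(negone_zpow_eq_one_iff _).mpr hor.add_one, one_mul]
      · -- e=-1, d=-1
        rcases Int.even_or_odd r' with her | hor
        · left
          refine ⟨by ring, ?_⟩
          rw [(negone_zpow_eq_negone_iff _).mpr her.add_one, neg_one_mul]
        · right
          have hes : Even s' := by
            rw [hor.neg_one_zpow] at hm1
            exact (negone_zpow_eq_one_iff s').mp (by linear_combination -hm1)
          refine ⟨?_, by ring⟩
          rw [(negone_zpow_eq_negone_iff _).mpr hes.add_one, neg_one_mul]
    · rintro (⟨rfl, rfl⟩ | ⟨rfl, rfl⟩)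
      · refine ⟨-1, (-1) ^ (r' + 1), Or.inr rfl, negone_zpow_or _, by ring, rfl, ?_, ?_⟩
        · rw [(negone_zpow_eq_one_iff u).mpr hu, ← zpow_mul,
            (negone_zpow_eq_one_iff _).mpr (hv.mul_left _), one_mul]
        · rw [← zpow_mul, ← zpow_add₀ hm1ne]
          apply (negone_zpow_eq_negone_iff _).mpr
          rcases Int.even_or_odd r' with her | hor
          · have hos : Odd s' := by
              rcases Int.even_or_odd s' with h | h
              · exact absurd ⟨her, h⟩ hne
              · exact h
            exact her.add_odd (her.add_one.mul hos)
          · exact hor.add_even ((hor.add_one).mul_right s')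
      · refine ⟨(-1) ^ (s' + 1), -1, negone_zpow_or _, Or.inr rfl, rfl, by ring, ?_, ?_⟩
        · rw [(negone_zpow_eq_one_iff v).mpr hv, ← zpow_mul,
            (negone_zpow_eq_one_iff _).mpr (hu.mul_left _), mul_one]
        · rw [← zpow_mul, ← zpow_add₀ hm1ne]
          apply (negone_zpow_eq_negone_iff _).mpr
          rcases Int.even_or_odd s' with hes | hos
          · have hor : Odd r' := by
              rcases Int.even_or_odd r' with h | h
              · exact absurd ⟨h, hes⟩ hne
              · exact h
            exact (hes.add_one.mul hor).add_even hes
          · exact ((hos.add_one).mul_right r').add_odd hos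
  · -- distinctness
    intro h
    rw [Prod.mk.injEq] at h
    obtain ⟨h1, h2'⟩ := h
    rcases Int.even_or_odd s' with hes | hos
    · have hor : Odd r' := by
        rcases Int.even_or_odd r' with h' | h'
        · exact absurd ⟨h', hes⟩ hne
        · exact h'
      rw [(negone_zpow_eq_one_iff _).mpr hor.add_one, one_mul] at h2'
      have hB : q ^ (r' : ℤ) ≠ 0 := zpow_ne_zero _ hq
      have hc : (2:ℂ) * q ^ (r' : ℤ) = 0 := by linear_combination h2'
      rcases mul_eq_zero.mp hc with h' | h'
      · norm_num at h'
      · exact hB h'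
    · rw [(negone_zpow_eq_one_iff _).mpr hos.add_one, one_mul] at h1
      have hA : q ^ (-s' : ℤ) ≠ 0 := zpow_ne_zero _ hq
      have hc : (2:ℂ) * q ^ (-s' : ℤ) = 0 := by linear_combination -h1
      rcases mul_eq_zero.mp hc with h' | h'
      · norm_num at h'
      · exact hA h'
end

section
/- Let q be a nonzero complex number that is not a root of unity, and let S be the set of pairs (α, β) of nonzero complex numbers such that α^u β^v = q² for some integers u, v, and α^m β^n ≠ 1 for all pairs of integers (m, n) ≠ (0, 0). Then S is uncountable. -/
open Polynomial in
lemma finite_pow_eq (k : ℕ) (hk : k ≠ 0) (c : ℂ) : {β : ℂ | β ^ k = c}.Finite := by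
  have h : (X ^ k - C c : ℂ[X]) ≠ 0 := by
    intro h
    have := congrArg natDegree h
    simp [natDegree_X_pow_sub_C, hk] at this
  exact (Polynomial.finite_setOf_isRoot h).subset (by
    intro β hβ
    simp only [Set.mem_setOf_eq, IsRoot, eval_sub, eval_pow, eval_X, eval_C]
    simpa [sub_eq_zero] using hβ)

lemma finite_zpow_eq (n : ℤ) (hn : n ≠ 0) (c : ℂ) (hc : c ≠ 0) :
    {β : ℂ | β ^ n = c}.Finite := by
  apply ((finite_pow_eq n.natAbs (by simpa using hn) c).union
    (finite_pow_eq n.natAbs (by simpa using hn) c⁻¹)).subset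
  intro β hβ
  simp only [Set.mem_setOf_eq] at hβ
  have hβ0 : β ≠ 0 := by
    intro h; rw [h, zero_zpow n hn] at hβ; exact hc hβ.symm
  rcases n.natAbs_eq with h | h
  · left
    show β ^ n.natAbs = c
    rw [← zpow_natCast, ← h]; exact hβ
  · right
    show β ^ n.natAbs = c⁻¹
    rw [← zpow_natCast, show (n.natAbs : ℤ) = -n by omega, zpow_neg, hβ]

/-- For `q` nonzero and not a root of unity, the set of pairs `(α, β)`
of nonzero complex numbers with `α^u β^v = q²` for some integers `u, v` and
`α^m β^n ≠ 1` for all `(m, n) ≠ (0, 0)` is uncountable. -/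
theorem generic_set_uncountable (q : ℂ) (hq : q ≠ 0)
    (hqn : ∀ n : ℤ, n ≠ 0 → q ^ n ≠ 1) :
    ¬({p : ℂ × ℂ | p.1 ≠ 0 ∧ p.2 ≠ 0 ∧ (∃ u v : ℤ, p.1 ^ u * p.2 ^ v = q ^ 2) ∧
        ∀ m n : ℤ, (m, n) ≠ (0, 0) → p.1 ^ m * p.2 ^ n ≠ 1} : Set (ℂ × ℂ)).Countable := by
  intro hS
  set S : Set (ℂ × ℂ) := {p : ℂ × ℂ | p.1 ≠ 0 ∧ p.2 ≠ 0 ∧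
      (∃ u v : ℤ, p.1 ^ u * p.2 ^ v = q ^ 2) ∧
      ∀ m n : ℤ, (m, n) ≠ (0, 0) → p.1 ^ m * p.2 ^ n ≠ 1} with hSdef
  -- bad set
  set B : Set ℂ := {0} ∪ ⋃ (p : ℤ × ℤ) (_ : p.2 ≠ 0), {β : ℂ | β ^ p.2 = (q ^ 2) ^ (-p.1)}
    with hBdef
  have hB : B.Countable := by
    apply Set.Countable.union (Set.countable_singleton 0)
    apply Set.countable_iUnion
    intro p
    apply Set.countable_iUnion
    intro hp
    exact (finite_zpow_eq p.2 hp ((q ^ 2) ^ (-p.1)) (zpow_ne_zero _ (pow_ne_zero 2 hq))).countable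
  -- good betas map into S
  have hgood : ∀ β : ℂ, β ∉ B → (q ^ 2, β) ∈ S := by
    intro β hβ
    simp only [hBdef, Set.mem_union, Set.mem_singleton_iff, Set.mem_iUnion,
      Set.mem_setOf_eq, not_or, not_exists] at hβ
    obtain ⟨hβ0, hβ1⟩ := hβ
    refine ⟨pow_ne_zero 2 hq, hβ0, ⟨1, 0, by simp⟩, ?_⟩
    intro m n hmn h
    rcases eq_or_ne n 0 with rfl | hn
    · have hm : m ≠ 0 := by simpa using hmn
      rw [zpow_zero, mul_one, ← zpow_natCast q 2, ← zpow_mul] at h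
      exact hqn (2 * m) (by omega) h
    · apply hβ1 (m, n) hn
      have h' : (q ^ 2 : ℂ) ^ m * β ^ n = 1 := h
      have : β ^ n = ((q ^ 2) ^ m)⁻¹ := by
        exact eq_inv_of_mul_eq_one_left (by rw [mul_comm]; exact h')
      rw [this, ← zpow_neg]
  -- conclude: ℂ countable
  have : (Set.univ : Set ℂ).Countable := by
    have h1 : (Set.univ : Set ℂ) ⊆ B ∪ (fun β : ℂ => ((q ^ 2 : ℂ), β)) ⁻¹' S := by
      intro β _
      by_cases hβ : β ∈ B
      · exact Or.inl hβ
      · exact Or.inr (hgood β hβ)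
    apply Set.Countable.mono h1
    apply hB.union
    apply hS.preimage
    intro a b hab
    simpa using congrArg Prod.snd hab
  exact not_countable_complex this
end

section
/- Let q be a nonzero complex number that is not a root of unity, and let S be the set of pairs (α, β) of nonzero complex numbers such that α^u β^v = q² for some integers u, v, and α^m β^n ≠ 1 for all pairs of integers (m, n) ≠ (0, 0). Then the set of orbits of the SL(2, ℤ)-action on S is uncountable; equivalently, there is no countable subset of S meeting every SL(2, ℤ)-orbit contained in S. -/
private instance : Uncountable ℂ := Complex.ofReal_injective.uncountable

private lemma finite_zpow_roots (c : ℂ) (hc : c ≠ 0) (n : ℤ) (hn : n ≠ 0) :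
    {β : ℂ | β ^ n = c}.Finite := by
  have key : ∀ (k : ℕ), k ≠ 0 → ∀ d : ℂ, {β : ℂ | β ^ k = d}.Finite := by
    intro k hk d
    have hpne : (Polynomial.X ^ k - Polynomial.C d : Polynomial ℂ) ≠ 0 :=
      Polynomial.X_pow_sub_C_ne_zero (Nat.pos_of_ne_zero hk) d
    refine (Polynomial.finite_setOf_isRoot hpne).subset ?_
    intro β hβ
    simp only [Set.mem_setOf_eq] at hβ ⊢
    simp [Polynomial.IsRoot, hβ, sub_eq_zero]
  have hsub : {β : ℂ | β ^ n = c} ⊆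
      {β : ℂ | β ^ n.natAbs = c} ∪ {β : ℂ | β ^ n.natAbs = c⁻¹} := by
    intro β hβ
    simp only [Set.mem_setOf_eq] at hβ
    have hβ0 : β ≠ 0 := by
      intro h; rw [h, zero_zpow n hn] at hβ; exact hc hβ.symm
    rcases Int.natAbs_eq n with h | h
    · left
      rw [h, zpow_natCast] at hβ
      exact hβ
    · right
      have : β ^ (-(n.natAbs : ℤ)) = c := by rw [← h]; exact hβ
      rw [zpow_neg, zpow_natCast] at this
      simp only [Set.mem_setOf_eq]
      rw [← this, inv_inv]
  have hk : n.natAbs ≠ 0 := by simpa using hn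
  exact ((key n.natAbs hk c).union (key n.natAbs hk c⁻¹)).subset hsub

/-- For `q` nonzero and not a root of unity, the family of
`SL(2, ℤ)`-orbits contained in the set `S` of pairs `(α, β)` of nonzero complex
numbers with `α^u β^v = q²` for some integers `u, v` and `α^m β^n ≠ 1` for all
`(m, n) ≠ (0, 0)` is uncountable: there is no countable subset of `S` meeting
every orbit contained in `S`. -/
theorem generic_orbits_uncountable (q : ℂ) (hq : q ≠ 0)
    (hqn : ∀ n : ℤ, n ≠ 0 → q ^ n ≠ 1) :
    ¬∃ T : Set (ℂ × ℂ),
      T ⊆ {p : ℂ × ℂ | p.1 ≠ 0 ∧ p.2 ≠ 0 ∧ (∃ u v : ℤ, p.1 ^ u * p.2 ^ v = q ^ 2) ∧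
          ∀ m n : ℤ, (m, n) ≠ (0, 0) → p.1 ^ m * p.2 ^ n ≠ 1} ∧
      T.Countable ∧
      ∀ p ∈ {p : ℂ × ℂ | p.1 ≠ 0 ∧ p.2 ≠ 0 ∧ (∃ u v : ℤ, p.1 ^ u * p.2 ^ v = q ^ 2) ∧
          ∀ m n : ℤ, (m, n) ≠ (0, 0) → p.1 ^ m * p.2 ^ n ≠ 1},
        ∃ t ∈ T, ∃ σ : Matrix.SpecialLinearGroup (Fin 2) ℤ,
          ((t.1 ^ ((σ : Matrix (Fin 2) (Fin 2) ℤ) 0 0) *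
              t.2 ^ ((σ : Matrix (Fin 2) (Fin 2) ℤ) 0 1),
            t.1 ^ ((σ : Matrix (Fin 2) (Fin 2) ℤ) 1 0) *
              t.2 ^ ((σ : Matrix (Fin 2) (Fin 2) ℤ) 1 1)) : ℂ × ℂ) = p := by
  rintro ⟨T, hTS, hTc, hTorb⟩
  have hq2 : (q : ℂ) ^ 2 ≠ 0 := pow_ne_zero 2 hq
  -- Bad set of β's
  set Bad : Set ℂ :=
    {0} ∪ ⋃ (m : ℤ), ⋃ (n : ℤ), ⋃ (_ : n ≠ 0), {β : ℂ | β ^ n = ((q ^ 2) ^ m)⁻¹}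
    with hBad
  have hBadc : Bad.Countable := by
    refine (Set.countable_singleton 0).union ?_
    refine Set.countable_iUnion fun m => Set.countable_iUnion fun n => ?_
    refine Set.countable_iUnion fun hn => ?_
    exact (finite_zpow_roots _ (inv_ne_zero (zpow_ne_zero m hq2)) n hn).countable
  -- Reachable second coordinates
  set C : Set ℂ := ⋃ t ∈ T, Set.range (fun p : ℤ × ℤ => t.1 ^ p.1 * t.2 ^ p.2)
    with hC
  have hCc : C.Countable := hTc.biUnion fun t _ => Set.countable_range _
  -- pick β outside
  obtain ⟨β, hβ⟩ : ∃ β : ℂ, β ∉ Bad ∪ C := by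
    by_contra h
    push_neg at h
    exact Set.not_countable_univ (α := ℂ)
      ((hBadc.union hCc).mono (fun x _ => h x))
  have hβBad : β ∉ Bad := fun h => hβ (Or.inl h)
  have hβC : β ∉ C := fun h => hβ (Or.inr h)
  have hβ0 : β ≠ 0 := by
    intro h; exact hβBad (Or.inl (by simp [h]))
  -- (q^2, β) is in S
  have hmem : ((q ^ 2, β) : ℂ × ℂ) ∈
      {p : ℂ × ℂ | p.1 ≠ 0 ∧ p.2 ≠ 0 ∧ (∃ u v : ℤ, p.1 ^ u * p.2 ^ v = q ^ 2) ∧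
          ∀ m n : ℤ, (m, n) ≠ (0, 0) → p.1 ^ m * p.2 ^ n ≠ 1} := by
    refine ⟨hq2, hβ0, ⟨1, 0, by simp⟩, ?_⟩
    intro m n hmn hone
    simp only at hone
    by_cases hn : n = 0
    · subst hn
      have hm : m ≠ 0 := by simpa using hmn
      rw [zpow_zero, mul_one] at hone
      have h2 : q ^ (2 * m) = 1 := by
        rw [← hone, ← zpow_natCast q 2, ← zpow_mul]
        norm_num
      exact hqn (2 * m) (by simpa using hm) h2
    · apply hβBad
      refine Or.inr ?_
      refine Set.mem_iUnion.2 ⟨m, Set.mem_iUnion.2 ⟨n, Set.mem_iUnion.2 ⟨hn, ?_⟩⟩⟩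
      rw [mul_comm] at hone
      exact eq_inv_of_mul_eq_one_left hone
  obtain ⟨t, htT, σ, hσ⟩ := hTorb _ hmem
  apply hβC
  have : t.1 ^ ((σ : Matrix (Fin 2) (Fin 2) ℤ) 1 0) *
      t.2 ^ ((σ : Matrix (Fin 2) (Fin 2) ℤ) 1 1) = β := congrArg Prod.snd hσ
  exact Set.mem_biUnion htT ⟨(_, _), this⟩
end
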